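/- arXiv:1212.5518 — 3 statements merged into one kernel-verified Lean document; each statement's English description precedes it below -/
import Mathlib

section
/- Let λ₁, …, λ_n be positive, pairwise distinct real numbers and let f_i(t) = λ_i e^{−λ_i t} for t ≥ 0 (and 0 for t < 0). Then the n-fold convolution f₁ * f₂ * ⋯ * f_n evaluated at t ≥ 0 equals Σ_{l=1}^{n} [ (∏_{k=1}^{n} λ_k) / (∏_{k=1, k≠l}^{n} (λ_k − λ_l)) ] · e^{−λ_l t}. -/
open MeasureTheory Finset Polynomial

noncomputable def expDens (l : ℝ) (t : ℝ) : ℝ :=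
  if 0 ≤ t then l * Real.exp (-l * t) else 0

noncomputable def convPair (f g : ℝ → ℝ) (t : ℝ) : ℝ :=
  ∫ s in (0 : ℝ)..t, f s * g (t - s)

noncomputable def convExp : List ℝ → ℝ → ℝ
  | [] => fun _ => 0
  | [l] => expDens l
  | l :: ls => convPair (expDens l) (convExp ls)

lemma convExp_cons (a : ℝ) (ls : List ℝ) (h : ls ≠ []) :
    convExp (a :: ls) = convPair (expDens a) (convExp ls) := by
  cases ls with
  | nil => exact absurd rfl h
  | cons b l => rfl

lemma integral_exp_mul (c : ℝ) (hc : c ≠ 0) (t : ℝ) :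
    ∫ s in (0:ℝ)..t, Real.exp (c * s) = (Real.exp (c * t) - 1) / c := by
  rw [intervalIntegral.integral_comp_mul_left (fun x => Real.exp x) hc, integral_exp]
  simp [mul_comm, div_eq_inv_mul]

lemma prod_erase_ite {ι : Type*} [DecidableEq ι] [Fintype ι] (h : ι → ℝ) (l : ι) :
    ∏ k ∈ univ.erase l, h k = ∏ k, if k = l then 1 else h k := by
  rw [← Finset.prod_erase univ (f := fun k => if k = l then 1 else h k) (a := l) (by simp)]
  exact prod_congr rfl fun k hk => by rw [if_neg (mem_erase.mp hk).1]

lemma prod_erase_succ {m : ℕ} (g : Fin (m + 1) → ℝ) (j : Fin m) :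
    ∏ k ∈ univ.erase (Fin.succ j), g k = g 0 * ∏ k ∈ univ.erase j, g (Fin.succ k) := by
  rw [prod_erase_ite g j.succ, Fin.prod_univ_succ, if_neg (Fin.succ_ne_zero j).symm,
    prod_erase_ite (fun k => g (Fin.succ k)) j]
  congr 1
  exact prod_congr rfl fun k _ => by simp [Fin.succ_inj]

lemma prod_erase_zero {m : ℕ} (g : Fin (m + 1) → ℝ) :
    ∏ k ∈ univ.erase (0 : Fin (m+1)), g k = ∏ j : Fin m, g (Fin.succ j) := by
  rw [prod_erase_ite g 0, Fin.prod_univ_succ, if_pos rfl, one_mul]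
  exact prod_congr rfl fun k _ => by rw [if_neg (Fin.succ_ne_zero k)]

lemma leadingCoeff_basis {F : Type*} [Field F] {ι : Type*} [DecidableEq ι]
    (s : Finset ι) (v : ι → F) (i : ι) :
    (Lagrange.basis s v i).leadingCoeff = ∏ j ∈ s.erase i, (v i - v j)⁻¹ := by
  rw [Lagrange.basis, leadingCoeff_prod]
  refine prod_congr rfl fun j _ => ?_
  rw [Lagrange.basisDivisor, leadingCoeff_mul, leadingCoeff_C, (monic_X_sub_C (v j)).leadingCoeff,
    mul_one]

lemma residue_sum {n : ℕ} (hn : 2 ≤ n) (v : Fin n → ℝ) (hv : Function.Injective v) :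
    ∑ l : Fin n, (∏ k ∈ univ.erase l, (v k - v l))⁻¹ = 0 := by
  have hsum : ∑ l : Fin n, ∏ k ∈ univ.erase l, (v l - v k)⁻¹ = 0 := by
    have h1 : ∑ j : Fin n, Lagrange.basis univ v j = 1 :=
      Lagrange.sum_basis (Set.injOn_of_injective hv) ⟨⟨0, by omega⟩, mem_univ _⟩
    have h2 := congrArg (fun p => Polynomial.coeff p (n - 1)) h1
    simp only [finset_sum_coeff] at h2
    rw [Polynomial.coeff_one, if_neg (by omega)] at h2
    rw [← h2]
    refine sum_congr rfl fun l _ => ?_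
    have hd : (Lagrange.basis univ v l).natDegree = n - 1 := by
      rw [Lagrange.natDegree_basis (Set.injOn_of_injective hv) (mem_univ l), card_univ,
        Fintype.card_fin]
    rw [← hd, Polynomial.coeff_natDegree, leadingCoeff_basis]
  calc ∑ l : Fin n, (∏ k ∈ univ.erase l, (v k - v l))⁻¹
      = ∑ l : Fin n, (-1 : ℝ) ^ (n - 1) * ∏ k ∈ univ.erase l, (v l - v k)⁻¹ := by
        refine sum_congr rfl fun l _ => ?_
        rw [← prod_inv_distrib]
        have : ∀ k ∈ univ.erase l, (v k - v l)⁻¹ = (-1 : ℝ) * (v l - v k)⁻¹ := by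
          intro k _
          rw [show v k - v l = -(v l - v k) by ring, inv_neg]; ring
        rw [prod_congr rfl this, prod_mul_distrib, prod_const, card_erase_of_mem (mem_univ l),
          card_univ, Fintype.card_fin]
    _ = 0 := by rw [← mul_sum, hsum, mul_zero]

lemma main_formula (m : ℕ) : ∀ (lam : Fin (m+1) → ℝ), (∀ k, 0 < lam k) →
    Function.Injective lam → ∀ t : ℝ, 0 ≤ t →
    convExp (List.ofFn lam) t =
      ∑ l : Fin (m+1), ((∏ k : Fin (m+1), lam k) /
        (∏ k ∈ Finset.univ.erase l, (lam k - lam l))) * Real.exp (-(lam l) * t) := by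
  induction m with
  | zero =>
    intro lam hpos hinj t ht
    have : List.ofFn lam = [lam 0] := by
      simp [List.ofFn_succ]
    rw [this]
    show expDens (lam 0) t = _
    rw [expDens, if_pos ht]
    rw [Fin.sum_univ_one, Fin.prod_univ_one]
    have : (univ.erase (0 : Fin 1)) = ∅ := by decide
    rw [this, prod_empty, div_one]
  | succ m ih =>
    intro lam hpos hinj t ht
    set μ : Fin (m+1) → ℝ := lam ∘ Fin.succ with hμ
    have hμpos : ∀ k, 0 < μ k := fun k => hpos _
    have hμinj : Function.Injective μ := hinj.comp (Fin.succ_injective _)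
    have hμne0 : ∀ j, μ j - lam 0 ≠ 0 :=
      fun j => sub_ne_zero_of_ne (fun h => (Fin.succ_ne_zero j) (hinj h))
    set P : ℝ := ∏ k : Fin (m+1), μ k with hP
    set D : Fin (m+1) → ℝ := fun j => ∏ k ∈ univ.erase j, (μ k - μ j) with hD
    have hDne : ∀ j, D j ≠ 0 := by
      intro j
      refine prod_ne_zero_iff.mpr fun k hk => sub_ne_zero_of_ne ?_
      exact fun h => (mem_erase.mp hk).1 (hμinj h)
    have hPne : P ≠ 0 := prod_ne_zero_iff.mpr fun k _ => (hμpos k).ne'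
    set c : Fin (m+1) → ℝ := fun j => P / D j with hc
    -- reduce convExp to convPair
    have hlist : List.ofFn lam = lam 0 :: List.ofFn μ := by
      simp [List.ofFn_succ, hμ]
    rw [hlist, convExp_cons _ _ (by simp)]
    rw [convPair]
    -- rewrite integrand
    have hcongr : Set.EqOn (fun s => expDens (lam 0) s * convExp (List.ofFn μ) (t - s))
        (fun s => ∑ j : Fin (m+1),
          (lam 0 * c j * Real.exp (-(μ j) * t)) * Real.exp ((μ j - lam 0) * s))
        (Set.uIcc 0 t) := by
      intro s hs
      rw [Set.uIcc_of_le ht] at hs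
      obtain ⟨hs0, hst⟩ := hs
      show expDens (lam 0) s * convExp (List.ofFn μ) (t - s) = _
      rw [expDens, if_pos hs0, ih μ hμpos hμinj (t - s) (by linarith), Finset.mul_sum]
      refine sum_congr rfl fun j _ => ?_
      have hexp : Real.exp (-lam 0 * s) * Real.exp (-(μ j) * (t - s)) =
          Real.exp (-(μ j) * t) * Real.exp ((μ j - lam 0) * s) := by
        rw [← Real.exp_add, ← Real.exp_add]; ring_nf
      calc lam 0 * Real.exp (-lam 0 * s) * (P / D j * Real.exp (-(μ j) * (t - s)))
          = (lam 0 * (P / D j)) * (Real.exp (-lam 0 * s) * Real.exp (-(μ j) * (t - s))) := by ring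
        _ = (lam 0 * (P / D j)) * (Real.exp (-(μ j) * t) * Real.exp ((μ j - lam 0) * s)) := by
            rw [hexp]
        _ = _ := by rw [hc]; ring
    rw [intervalIntegral.integral_congr hcongr]
    rw [intervalIntegral.integral_finset_sum (fun j _ => (Continuous.intervalIntegrable (by
      exact continuous_const.mul (Real.continuous_exp.comp (continuous_const.mul continuous_id)))
      _ _))]
    have hterm : ∀ j : Fin (m+1),
        (∫ s in (0:ℝ)..t, (lam 0 * c j * Real.exp (-(μ j) * t)) * Real.exp ((μ j - lam 0) * s))
        = (lam 0 * c j / (μ j - lam 0)) * Real.exp (-lam 0 * t)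
          - (lam 0 * c j / (μ j - lam 0)) * Real.exp (-(μ j) * t) := by
      intro j
      rw [intervalIntegral.integral_const_mul, integral_exp_mul _ (hμne0 j)]
      have hE : Real.exp (-(μ j) * t) * Real.exp ((μ j - lam 0) * t) = Real.exp (-lam 0 * t) := by
        rw [← Real.exp_add]; ring_nf
      simp only [div_eq_mul_inv]
      linear_combination (lam 0 * c j * (μ j - lam 0)⁻¹) * hE
    rw [sum_congr rfl (fun j _ => hterm j)]
    rw [Finset.sum_sub_distrib]
    -- now the algebraic identification
    rw [Fin.sum_univ_succ
      (f := fun l => ((∏ k : Fin (m+2), lam k) /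
        (∏ k ∈ Finset.univ.erase l, (lam k - lam l))) * Real.exp (-(lam l) * t))]
    have hprod_all : ∏ k : Fin (m+2), lam k = lam 0 * P := by
      rw [Fin.prod_univ_succ]; rfl
    have hprod0 : ∏ k ∈ univ.erase (0 : Fin (m+2)), (lam k - lam 0) =
        ∏ j : Fin (m+1), (μ j - lam 0) := by
      rw [prod_erase_zero]; rfl
    have hprodsucc : ∀ j : Fin (m+1),
        ∏ k ∈ univ.erase (Fin.succ j), (lam k - lam (Fin.succ j)) =
          (lam 0 - μ j) * D j := by
      intro j
      rw [prod_erase_succ (fun k => lam k - lam (Fin.succ j)) j]; rfl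
    -- coefficient matching for succ terms
    have hB : ∀ j : Fin (m+1),
        (lam 0 * c j / (μ j - lam 0)) * Real.exp (-(μ j) * t) =
        -(((∏ k : Fin (m+2), lam k) /
          (∏ k ∈ Finset.univ.erase (Fin.succ j), (lam k - lam (Fin.succ j)))) *
          Real.exp (-(lam (Fin.succ j)) * t)) := by
      intro j
      rw [hprod_all, hprodsucc j, show lam (Fin.succ j) = μ j from rfl, hc]
      rw [show (lam 0 - μ j) * D j = -((μ j - lam 0) * D j) from by ring, div_neg]
      simp only [div_eq_mul_inv, mul_inv, neg_mul, mul_neg, neg_neg]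
      ring
    -- coefficient matching for the zero term, using the residue identity
    have hres := residue_sum (n := m+2) (by omega) lam hinj
    rw [Fin.sum_univ_succ (f := fun l => (∏ k ∈ univ.erase l, (lam k - lam l))⁻¹)] at hres
    rw [hprod0] at hres
    have hres2 : ∑ j : Fin (m+1), ((μ j - lam 0) * D j)⁻¹ =
        (∏ j : Fin (m+1), (μ j - lam 0))⁻¹ := by
      have : ∀ j : Fin (m+1), (∏ k ∈ univ.erase (Fin.succ j), (lam k - lam (Fin.succ j)))⁻¹ =
          -(((μ j - lam 0) * D j)⁻¹) := by
        intro j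
        rw [hprodsucc j, show lam 0 - μ j = -(μ j - lam 0) by ring, neg_mul, inv_neg]
      rw [sum_congr rfl (fun j _ => this j), Finset.sum_neg_distrib] at hres
      linarith
    have hA : ∑ j : Fin (m+1), (lam 0 * c j / (μ j - lam 0)) * Real.exp (-lam 0 * t) =
        ((∏ k : Fin (m+2), lam k) /
          (∏ k ∈ Finset.univ.erase (0 : Fin (m+2)), (lam k - lam 0))) *
          Real.exp (-(lam 0) * t) := by
      rw [hprod_all, hprod0, ← Finset.sum_mul]
      congr 1
      have : ∀ j ∈ (univ : Finset (Fin (m+1))), lam 0 * c j / (μ j - lam 0)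
          = (lam 0 * P) * ((μ j - lam 0) * D j)⁻¹ := by
        intro j _
        rw [hc]
        simp only [div_eq_mul_inv, mul_inv]
        ring
      rw [sum_congr rfl this, ← Finset.mul_sum, hres2, div_eq_mul_inv]
    rw [sum_congr rfl (fun j _ => hB j), Finset.sum_neg_distrib, hA]
    ring

theorem stmt_2 (n : ℕ) (hn : 1 ≤ n) (lam : Fin n → ℝ)
    (hpos : ∀ k, 0 < lam k)
    (hdist : ∀ k l, k ≠ l → lam k ≠ lam l)
    (t : ℝ) (ht : 0 ≤ t) :
    convExp (List.ofFn lam) t =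
      ∑ l : Fin n, ((∏ k : Fin n, lam k) /
        (∏ k ∈ Finset.univ.erase l, (lam k - lam l))) * Real.exp (-(lam l) * t) := by
  obtain ⟨m, rfl⟩ : ∃ m, n = m + 1 := ⟨n - 1, by omega⟩
  have hinj : Function.Injective lam := by
    intro a b hab
    by_contra hne
    exact hdist a b hne hab
  exact main_formula m lam hpos hinj t ht
end

section
/- Let G : [0,∞) → [0,1] be differentiable with derivative g = G' ≥ 0, and let c₀,…,c_{N−2} be positive reals. Then d/dt [ Σ_{r=0}^{N−2} c_r binom(N−2,r) G(t)^r (1−G(t))^{N−2−r} ] = Σ_{r=0}^{N−3} g(t) G(t)^r (1−G(t))^{N−3−r} binom(N−2,r+1)(r+1)(c_{r+1} − c_r). Consequently, if the sequence (c_r) is non-decreasing, then Q(t) := 2G(t)^{N−2} + this derivative is nonnegative for all t ≥ 0. -/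
theorem stmt_9 (N : ℕ) (hN : 2 ≤ N) (G : ℝ → ℝ)
    (hGd : Differentiable ℝ G)
    (hGmap : ∀ t, G t ∈ Set.Icc (0 : ℝ) 1)
    (hg : ∀ t, 0 ≤ deriv G t)
    (c : ℕ → ℝ) (hc : ∀ r, r ≤ N - 2 → 0 < c r) :
    (∀ t : ℝ, 0 ≤ t →
      HasDerivAt (fun t => ∑ r ∈ Finset.range (N - 1),
          c r * ((N - 2).choose r : ℝ) * G t ^ r * (1 - G t) ^ (N - 2 - r))
        (∑ r ∈ Finset.range (N - 2),
          deriv G t * G t ^ r * (1 - G t) ^ (N - 3 - r) *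
            ((N - 2).choose (r + 1) : ℝ) * ((r : ℝ) + 1) * (c (r + 1) - c r)) t) ∧
    ((∀ r, r + 1 ≤ N - 2 → c r ≤ c (r + 1)) → ∀ t : ℝ, 0 ≤ t →
      0 ≤ 2 * G t ^ (N - 2) +
        ∑ r ∈ Finset.range (N - 2),
          deriv G t * G t ^ r * (1 - G t) ^ (N - 3 - r) *
            ((N - 2).choose (r + 1) : ℝ) * ((r : ℝ) + 1) * (c (r + 1) - c r)) := by
  have h1 : N - 1 = N - 2 + 1 := by omega
  have h3 : N - 3 = N - 2 - 1 := by omega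
  rw [h1, h3]
  set M := N - 2 with hMdef
  constructor
  · intro t ht
    set x := G t with hx
    set g := deriv G t with hgdef
    have H : ∀ r ∈ Finset.range (M + 1),
        HasDerivAt (fun t => c r * ((M).choose r : ℝ) * G t ^ r * (1 - G t) ^ (M - r))
          ((c r * ((M).choose r : ℝ) * ((r : ℝ) * x ^ (r - 1) * g)) * (1 - x) ^ (M - r)
            + (c r * ((M).choose r : ℝ) * x ^ r) *
              (((M - r : ℕ) : ℝ) * (1 - x) ^ (M - r - 1) * (0 - g))) t := by
      intro r _
      have hGpow : HasDerivAt (fun t => G t ^ r) ((r : ℝ) * x ^ (r - 1) * g) t :=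
        (hGd t).hasDerivAt.pow r
      have hGpow2 : HasDerivAt (fun t => (1 - G t) ^ (M - r))
          (((M - r : ℕ) : ℝ) * (1 - x) ^ (M - r - 1) * (0 - g)) t :=
        ((hasDerivAt_const t (1:ℝ)).sub (hGd t).hasDerivAt).pow (M - r)
      exact (HasDerivAt.const_mul (c r * ((M).choose r : ℝ)) hGpow).mul hGpow2
    have hsum := HasDerivAt.fun_sum H
    refine HasDerivAt.congr_deriv hsum ?_
    symm
    rw [Finset.sum_add_distrib, Finset.sum_range_succ', Finset.sum_range_succ]
    have e0 : (c 0 * ((M).choose 0 : ℝ) * ((0 : ℕ) * x ^ (0 - 1) * g)) * (1 - x) ^ (M - 0) = 0 := by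
      simp
    have eM : (c M * ((M).choose M : ℝ) * x ^ M) *
        (((M - M : ℕ) : ℝ) * (1 - x) ^ (M - M - 1) * (0 - g)) = 0 := by
      simp
    rw [e0, eM, add_zero, add_zero, ← Finset.sum_add_distrib]
    apply Finset.sum_congr rfl
    intro r hr
    have hrM : r < M := Finset.mem_range.mp hr
    have hch : ((M - r : ℕ) : ℝ) * ((M).choose r : ℝ) = ((r : ℝ) + 1) * ((M).choose (r + 1) : ℝ) := by
      have := Nat.choose_succ_right_eq M r
      have h2 : ((M.choose (r+1) * (r+1) : ℕ) : ℝ) = ((M.choose r * (M - r) : ℕ) : ℝ) := by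
        exact_mod_cast congrArg (Nat.cast : ℕ → ℝ) this
      push_cast at h2
      linarith
    have ee1 : M - (r + 1) = M - 1 - r := by omega
    have ee2 : M - r - 1 = M - 1 - r := by omega
    have ee3 : r + 1 - 1 = r := by omega
    rw [ee1, ee2, ee3]
    push_cast
    linear_combination (c r * x ^ r * (1 - x) ^ (M - 1 - r) * g) * hch
  · intro hmono t ht
    have hx0 := (hGmap t).1
    have hx1 := (hGmap t).2
    apply add_nonneg
    · positivity
    · apply Finset.sum_nonneg
      intro r hr
      have hrM : r < M := Finset.mem_range.mp hr
      have hcc : 0 ≤ c (r + 1) - c r := sub_nonneg.mpr (hmono r (by omega))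
      have : (0:ℝ) ≤ (1 - G t) ^ (M - 1 - r) := pow_nonneg (by linarith) _
      refine mul_nonneg (mul_nonneg (mul_nonneg (mul_nonneg (mul_nonneg (hg t)
        (pow_nonneg hx0 r)) this) (Nat.cast_nonneg _)) (by positivity)) hcc
end

section
/- Let V : [0,1] → ℝ be C¹, strictly increasing, with bounded derivative, and for each N set λ_k = (N−k+1)/((N−k)(V((k+1)/N) − V(k/N))) for k = 1,…,N−1, assumed pairwise distinct. Let p_N(t) = P(T₁ + ⋯ + T_{N−1} ≤ t), where T_k are independent exponentials with rates λ_k. Then p_N(t) → H(t − (V(1) − V(0))) as N → ∞ for every t ≠ V(1) − V(0), where H is the Heaviside function. -/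
open MeasureTheory ProbabilityTheory Filter Real Set


lemma exp_pdf_fun (r : ℝ) (hr : 0 < r) :
    ProbabilityTheory.expMeasure r
      = MeasureTheory.volume.withDensity
        (fun x => ((if 0 ≤ x then r * rexp (-(r * x)) else 0).toNNReal : ENNReal)) := by
  have : (ProbabilityTheory.exponentialPDF r)
      = fun x => ((if 0 ≤ x then r * rexp (-(r * x)) else 0).toNNReal : ENNReal) := by
    funext x
    by_cases h : 0 ≤ x
    · rw [exponentialPDF_of_nonneg h, if_pos h]; rfl
    · rw [exponentialPDF_of_neg (lt_of_not_ge h), if_neg h]; simp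
  rw [← this]
  rfl

lemma exp_meas_nnreal (r : ℝ) :
    Measurable (fun x : ℝ => (if 0 ≤ x then r * rexp (-(r * x)) else 0).toNNReal) := by
  apply Measurable.real_toNNReal
  apply Measurable.ite measurableSet_Ici (by fun_prop) measurable_const

lemma exp_integral_eq (r : ℝ) (hr : 0 < r) (g : ℝ → ℝ) :
    ∫ x, g x ∂(ProbabilityTheory.expMeasure r)
      = ∫ x in Ioi (0:ℝ), r * rexp (-(r * x)) * g x := by
  rw [exp_pdf_fun r hr, integral_withDensity_eq_integral_smul (exp_meas_nnreal r)]
  have : (fun x => (if 0 ≤ x then r * rexp (-(r * x)) else 0).toNNReal • g x)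
      = Set.indicator (Ici (0:ℝ)) (fun x => r * rexp (-(r * x)) * g x) := by
    funext x
    by_cases h : 0 ≤ x
    · rw [if_pos h, Set.indicator_of_mem (mem_Ici.2 h)]
      rw [NNReal.smul_def, Real.coe_toNNReal _ (by positivity), smul_eq_mul]
    · rw [if_neg h, Set.indicator_of_notMem (by simpa using h)]
      simp
  rw [this, integral_indicator measurableSet_Ici, integral_Ici_eq_integral_Ioi]

lemma exp_moment1 (r : ℝ) (hr : 0 < r) :
    ∫ x, x ∂(ProbabilityTheory.expMeasure r) = 1 / r := by
  rw [exp_integral_eq r hr]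
  have h1 : ∀ x ∈ Ioi (0:ℝ), r * rexp (-(r * x)) * x = r * (x ^ ((2:ℝ) - 1) * rexp (-(r * x))) := by
    intro x hx
    rw [show ((2:ℝ) - 1) = 1 by norm_num, Real.rpow_one]
    ring
  rw [setIntegral_congr_fun measurableSet_Ioi h1, MeasureTheory.integral_const_mul,
    Real.integral_rpow_mul_exp_neg_mul_Ioi (by norm_num) hr, Real.Gamma_two]
  rw [show ((1:ℝ)/r) ^ (2:ℝ) = (1/r) * (1/r) by
    rw [show (2:ℝ) = ((2:ℕ):ℝ) by norm_num, Real.rpow_natCast]; ring]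
  field_simp

lemma exp_moment2 (r : ℝ) (hr : 0 < r) :
    ∫ x, x ^ 2 ∂(ProbabilityTheory.expMeasure r) = 2 / r ^ 2 := by
  rw [exp_integral_eq r hr]
  have h1 : ∀ x ∈ Ioi (0:ℝ), r * rexp (-(r * x)) * x ^ 2
      = r * (x ^ ((3:ℝ) - 1) * rexp (-(r * x))) := by
    intro x hx
    rw [show ((3:ℝ) - 1) = 2 by norm_num,
      show x ^ (2:ℝ) = x ^ (2:ℕ) by rw [← Real.rpow_natCast]; norm_num]
    ring
  rw [setIntegral_congr_fun measurableSet_Ioi h1, MeasureTheory.integral_const_mul,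
    Real.integral_rpow_mul_exp_neg_mul_Ioi (by norm_num) hr]
  have hg3 : Real.Gamma 3 = 2 := by
    rw [show (3:ℝ) = 2 + 1 by norm_num, Real.Gamma_add_one (by norm_num), Real.Gamma_two]; norm_num
  rw [hg3, show ((1:ℝ)/r) ^ (3:ℝ) = (1/r) * (1/r) * (1/r) by
    rw [show (3:ℝ) = ((3:ℕ):ℝ) by norm_num, Real.rpow_natCast]; ring]
  field_simp

lemma exp_integrable_sq (r : ℝ) (hr : 0 < r) :
    Integrable (fun x => x ^ 2) (ProbabilityTheory.expMeasure r) := by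
  rw [exp_pdf_fun r hr, integrable_withDensity_iff_integrable_smul (exp_meas_nnreal r)]
  have : (fun x => (if 0 ≤ x then r * rexp (-(r * x)) else 0).toNNReal • x ^ 2)
      = Set.indicator (Ici (0:ℝ)) (fun x => r * rexp (-(r * x)) * x ^ 2) := by
    funext x
    by_cases h : 0 ≤ x
    · rw [if_pos h, Set.indicator_of_mem (mem_Ici.2 h)]
      rw [NNReal.smul_def, Real.coe_toNNReal _ (by positivity), smul_eq_mul]
    · rw [if_neg h, Set.indicator_of_notMem (by simpa using h)]
      simp
  rw [this, integrable_indicator_iff measurableSet_Ici, IntegrableOn,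
    Measure.restrict_congr_set Ioi_ae_eq_Ici.symm]
  have h2 : IntegrableOn (fun x : ℝ => x ^ (2:ℝ) * rexp (-r * x ^ (1:ℝ))) (Ioi 0) := by
    exact integrableOn_rpow_mul_exp_neg_mul_rpow (by norm_num) (by norm_num) hr
  apply Integrable.const_mul (c := r) at h2
  apply (integrableOn_congr_fun ?_ measurableSet_Ioi).2 h2
  intro x hx
  simp only
  rw [show x ^ ((1:ℝ)) = x from Real.rpow_one x,
    show x ^ ((2:ℝ)) = x ^ (2:ℕ) by rw [← Real.rpow_natCast]; norm_num]
  ring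

lemma exp_memLp (r : ℝ) (hr : 0 < r) :
    MemLp (id : ℝ → ℝ) 2 (ProbabilityTheory.expMeasure r) := by
  rw [memLp_two_iff_integrable_sq aestronglyMeasurable_id]
  exact exp_integrable_sq r hr



lemma exp_Iic (r : ℝ) (hr : 0 < r) (x : ℝ) :
    ProbabilityTheory.expMeasure r (Iic x)
      = ENNReal.ofReal (if 0 ≤ x then 1 - rexp (-(r * x)) else 0) := by
  have h1 : ProbabilityTheory.expMeasure r (Iic x)
      = ∫⁻ y in Iic x, ProbabilityTheory.exponentialPDF r y := by
    rw [show ProbabilityTheory.expMeasure r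
        = MeasureTheory.volume.withDensity (ProbabilityTheory.exponentialPDF r) from rfl,
      withDensity_apply _ measurableSet_Iic]
  rw [h1, ProbabilityTheory.lintegral_exponentialPDF_eq_antiDeriv hr x]

lemma map_eq_exp {Ω : Type*} [MeasureSpace Ω] [IsProbabilityMeasure (ℙ : Measure Ω)]
    (X : Ω → ℝ) (hX : Measurable X) (r : ℝ) (hr : 0 < r)
    (h : ∀ x : ℝ, 0 ≤ x → ℙ {ω | x < X ω} = ENNReal.ofReal (rexp (-r * x))) :
    Measure.map X ℙ = ProbabilityTheory.expMeasure r := by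
  have hmap : IsProbabilityMeasure (Measure.map X ℙ) :=
    Measure.isProbabilityMeasure_map hX.aemeasurable
  apply Measure.ext_of_Iic
  intro x
  rw [Measure.map_apply hX measurableSet_Iic, exp_Iic r hr x]
  by_cases hx : 0 ≤ x
  · rw [if_pos hx]
    have hset : X ⁻¹' Iic x = {ω | x < X ω}ᶜ := by
      ext ω; simp [not_lt]
    have hm : MeasurableSet {ω | x < X ω} := hX measurableSet_Ioi
    rw [hset, measure_compl hm (measure_ne_top _ _), h x hx,
      measure_univ, ENNReal.ofReal_sub _ (Real.exp_nonneg _), ENNReal.ofReal_one, neg_mul]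
  · rw [if_neg hx, ENNReal.ofReal_zero]
    have hsub : X ⁻¹' Iic x ⊆ {ω | 0 < X ω}ᶜ := by
      intro ω hω
      simp only [mem_preimage, mem_Iic] at hω
      simp only [Set.mem_compl_iff, Set.mem_setOf_eq, not_lt]
      linarith [lt_of_not_ge hx]
    have h0 : ℙ ({ω | (0:ℝ) < X ω}ᶜ) = 0 := by
      have hm : MeasurableSet {ω | (0:ℝ) < X ω} := hX measurableSet_Ioi
      rw [measure_compl hm (measure_ne_top _ _), h 0 le_rfl]
      simp
    exact le_antisymm (le_trans (measure_mono hsub) h0.le) zero_le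

lemma tail_moments {Ω : Type*} [MeasureSpace Ω] [IsProbabilityMeasure (ℙ : Measure Ω)]
    (X : Ω → ℝ) (hX : Measurable X) (r : ℝ) (hr : 0 < r)
    (h : ∀ x : ℝ, 0 ≤ x → ℙ {ω | x < X ω} = ENNReal.ofReal (rexp (-r * x))) :
    MemLp X 2 ℙ ∧ (∫ ω, X ω ∂ℙ) = 1 / r ∧ variance X ℙ = 1 / r ^ 2 := by
  have hmap := map_eq_exp X hX r hr h
  have hLp : MemLp X 2 (ℙ : Measure Ω) := by
    have := (memLp_map_measure_iff (f := X) (g := (id : ℝ → ℝ)) (p := 2)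
      aestronglyMeasurable_id hX.aemeasurable).1 (by rw [hmap]; exact exp_memLp r hr)
    simpa using this
  have hE : (∫ ω, X ω ∂ℙ) = 1 / r := by
    have := integral_map (μ := (ℙ : Measure Ω)) (φ := X) (f := (fun x : ℝ => x)) hX.aemeasurable
      aestronglyMeasurable_id
    rw [hmap, exp_moment1 r hr] at this
    exact this.symm
  refine ⟨hLp, hE, ?_⟩
  have hE2 : (∫ ω, X ω ^ 2 ∂ℙ) = 2 / r ^ 2 := by
    have := integral_map (μ := (ℙ : Measure Ω)) (φ := X) (f := (fun x : ℝ => x ^ 2)) hX.aemeasurable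
      (by fun_prop)
    rw [hmap, exp_moment2 r hr] at this
    exact this.symm
  rw [variance_eq_sub hLp]
  have : (∫ ω, (X ^ 2) ω ∂ℙ) = 2 / r ^ 2 := by
    simpa [Pi.pow_apply] using hE2
  rw [this, hE]
  field_simp
  ring


lemma telescope_sum (g : ℕ → ℝ) (N : ℕ) (hN : 1 ≤ N) :
    ∑ k ∈ Finset.Icc 1 (N-1), (g (k+1) - g k) = g N - g 1 := by
  rw [← Finset.Ico_add_one_right_eq_Icc, Nat.sub_add_cancel hN,
    Finset.sum_Ico_eq_sum_range]
  have : ∀ i, g (1 + i + 1) - g (1 + i) = (fun j => g (1 + j)) (i+1) - (fun j => g (1+j)) i := by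
    intro i; simp only; ring_nf
  simp only [this, Finset.sum_range_sub (fun j => g (1 + j))]
  norm_num
  rw [add_comm, Nat.sub_add_cancel hN]

lemma aux_frac (x : ℝ) (hx : 1 ≤ x) : (1/(x+1))^2 ≤ 1/x - 1/(x+1) := by
  have h0 : 0 < x := by linarith
  have e : 1/x - 1/(x+1) = 1/(x*(x+1)) := by field_simp; ring
  rw [e, div_pow, one_pow]
  apply one_div_le_one_div_of_le (by positivity) (by nlinarith)

lemma harmonic_sq_sum (N : ℕ) (hN : 2 ≤ N) :
    ∑ k ∈ Finset.Icc 1 (N-1), (1 / ((N:ℝ) - k + 1))^2 ≤ 1 := by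
  have h1 : ∀ k ∈ Finset.Icc 1 (N-1), (1 / ((N:ℝ) - k + 1))^2
      ≤ (fun j : ℕ => 1 / ((N:ℝ) - j + 1)) (k+1) - (fun j : ℕ => 1 / ((N:ℝ) - j + 1)) k := by
    intro k hk
    simp only [Finset.mem_Icc] at hk
    have hkN : (k:ℝ) + 1 ≤ N := by
      have : k + 1 ≤ N := by omega
      exact_mod_cast this
    have hx : (1:ℝ) ≤ (N:ℝ) - k := by linarith
    have := aux_frac ((N:ℝ) - k) hx
    simp only
    push_cast
    have e1 : (N:ℝ) - (k+1) + 1 = (N:ℝ) - k := by ring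
    rw [e1]
    linarith
  calc ∑ k ∈ Finset.Icc 1 (N-1), (1 / ((N:ℝ) - k + 1))^2
      ≤ ∑ k ∈ Finset.Icc 1 (N-1), ((fun j : ℕ => 1 / ((N:ℝ) - j + 1)) (k+1)
          - (fun j : ℕ => 1 / ((N:ℝ) - j + 1)) k) := Finset.sum_le_sum h1
    _ = 1 / ((N:ℝ) - N + 1) - 1 / ((N:ℝ) - (1:ℕ) + 1) :=
        telescope_sum (fun j : ℕ => 1 / ((N:ℝ) - j + 1)) N (by omega)
    _ ≤ 1 := by
        have h3 : (0:ℝ) < (N:ℝ) - 1 + 1 := by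
          have : (2:ℝ) ≤ N := by exact_mod_cast hN
          linarith
        have h4 : (0:ℝ) ≤ 1 / ((N:ℝ) - 1 + 1) := by positivity
        have h2 : ((N:ℝ) - N + 1) = 1 := by ring
        rw [h2]
        push_cast
        linarith


lemma mvt_bound (V : ℝ → ℝ) (C : ℝ)
    (hV : ContDiffOn ℝ 1 V (Set.Icc 0 1))
    (hC : ∀ x ∈ Set.Icc (0:ℝ) 1, |deriv V x| ≤ C)
    {a b : ℝ} (ha : a ∈ Set.Icc (0:ℝ) 1) (hb : b ∈ Set.Icc (0:ℝ) 1) (hab : a < b) :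
    V b - V a ≤ C * (b - a) := by
  have hsub : Set.Icc a b ⊆ Set.Icc (0:ℝ) 1 :=
    Set.Icc_subset_Icc ha.1 hb.2
  have hsub2 : Set.Ioo a b ⊆ Set.Icc (0:ℝ) 1 :=
    Set.Subset.trans Set.Ioo_subset_Icc_self hsub
  obtain ⟨c, hc, hslope⟩ := exists_deriv_eq_slope V hab
    (hV.continuousOn.mono hsub)
    ((hV.differentiableOn one_ne_zero).mono hsub2)
  have hcC : |deriv V c| ≤ C := hC c (hsub2 hc)
  have hba : 0 < b - a := by linarith
  have : V b - V a = deriv V c * (b - a) := by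
    field_simp at hslope
    linarith [hslope]
  rw [this]
  have h1 : deriv V c ≤ C := (abs_le.1 hcC).2
  nlinarith
set_option maxHeartbeats 1000000 in
theorem stmt_19 (V : ℝ → ℝ)
    (hV : ContDiffOn ℝ 1 V (Set.Icc 0 1))
    (hmono : StrictMonoOn V (Set.Icc 0 1))
    (hbdd : ∃ C : ℝ, ∀ x ∈ Set.Icc (0 : ℝ) 1, |deriv V x| ≤ C)
    (lam : ℕ → ℕ → ℝ)
    (hlam : ∀ N, 2 ≤ N → ∀ k, 1 ≤ k → k ≤ N - 1 →
      lam N k = ((N : ℝ) - k + 1) /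
        (((N : ℝ) - k) * (V ((k + 1 : ℕ) / N) - V ((k : ℕ) / N))))
    (hdist : ∀ N, 2 ≤ N → ∀ k l, 1 ≤ k → k ≤ N - 1 → 1 ≤ l → l ≤ N - 1 →
      k ≠ l → lam N k ≠ lam N l)
    (Ω : ℕ → Type) (inst : ∀ N, MeasureSpace (Ω N))
    (instP : ∀ N, IsProbabilityMeasure (ℙ : Measure (Ω N)))
    (T : ∀ N, ℕ → Ω N → ℝ)
    (hmeas : ∀ N k, Measurable (T N k))
    (hind : ∀ N, iIndepFun (T N) ℙ)
    (hTdist : ∀ N, 2 ≤ N → ∀ k, 1 ≤ k → k ≤ N - 1 → ∀ x : ℝ, 0 ≤ x →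
      ℙ {ω | x < T N k ω} = ENNReal.ofReal (Real.exp (-(lam N k) * x))) :
    ∀ t : ℝ, t ≠ V 1 - V 0 →
      Tendsto (fun N : ℕ =>
          (ℙ {ω | ∑ k ∈ Finset.Icc 1 (N - 1), T N k ω ≤ t}).toReal)
        atTop (nhds (if t < V 1 - V 0 then 0 else 1)) := by
  classical
  obtain ⟨C₀, hC₀⟩ := hbdd
  set C : ℝ := max C₀ 0 with hCdef
  have hC : ∀ x ∈ Set.Icc (0:ℝ) 1, |deriv V x| ≤ C :=
    fun x hx => (hC₀ x hx).trans (le_max_left _ _)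
  have hCnn : (0:ℝ) ≤ C := le_max_right _ _
  set μ : ℝ := V 1 - V 0 with hμdef
  have hV0le : ∀ y ∈ Set.Icc (0:ℝ) 1, V 0 ≤ V y := by
    intro y hy
    rcases eq_or_lt_of_le hy.1 with h | h
    · rw [← h]
    · exact (hmono (by norm_num) hy h).le
  set D : ℕ → ℕ → ℝ := fun N k => V ((k + 1 : ℕ) / N) - V ((k : ℕ) / N) with hDdef
  set mf : ℕ → ℝ := fun N => ∑ k ∈ Finset.Icc 1 (N-1), 1 / lam N k with hmfdef
  set vf : ℕ → ℝ := fun N => ∑ k ∈ Finset.Icc 1 (N-1), 1 / (lam N k) ^ 2 with hvfdef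
  -- per-k analytic facts
  have hfacts : ∀ N, 2 ≤ N → ∀ k, 1 ≤ k → k ≤ N - 1 →
      0 < D N k ∧ D N k ≤ C / N ∧ 0 < lam N k ∧
      1 / lam N k = D N k - D N k * (1 / ((N:ℝ) - k + 1)) ∧
      1 / (lam N k) ^ 2 ≤ (D N k) ^ 2 ∧
      (0:ℝ) ≤ 1 / ((N:ℝ) - k + 1) ∧ 1 / ((N:ℝ) - k + 1) ≤ 1 := by
    intro N hN k hk1 hk2
    have hNpos : (0:ℝ) < N := by
      have : (2:ℝ) ≤ N := by exact_mod_cast hN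
      linarith
    have hkN : (k:ℝ) + 1 ≤ N := by
      have : k + 1 ≤ N := by omega
      exact_mod_cast this
    have hk0 : (0:ℝ) ≤ k := Nat.cast_nonneg k
    have hNk1 : (1:ℝ) ≤ (N:ℝ) - k := by linarith
    have ha : (k:ℝ)/N ∈ Set.Icc (0:ℝ) 1 := by
      constructor
      · positivity
      · rw [div_le_one hNpos]; linarith
    have hbmem : ((k:ℝ)+1)/N ∈ Set.Icc (0:ℝ) 1 := by
      constructor
      · positivity
      · rw [div_le_one hNpos]; linarith
    have hab : (k:ℝ)/N < ((k:ℝ)+1)/N := by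
      rw [div_lt_div_iff₀ hNpos hNpos]
      nlinarith
    have hDD : D N k = V (((k:ℝ)+1)/N) - V ((k:ℝ)/N) := by
      simp only [hDdef]
      push_cast
      ring_nf
    have hDpos : 0 < D N k := by
      rw [hDD]
      have := hmono ha hbmem hab
      linarith
    have hDC : D N k ≤ C / N := by
      rw [hDD]
      have := mvt_bound V C hV hC ha hbmem hab
      have he : ((k:ℝ)+1)/N - (k:ℝ)/N = 1/N := by field_simp; ring
      rw [he] at this
      calc V (((k:ℝ)+1)/N) - V ((k:ℝ)/N) ≤ C * (1/N) := this
        _ = C / N := by ring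
    have hlamval := hlam N hN k hk1 hk2
    have hlamval' : lam N k = ((N:ℝ) - k + 1) / (((N:ℝ) - k) * D N k) := hlamval
    have hden : (0:ℝ) < ((N:ℝ) - k) * D N k := by
      apply mul_pos (by linarith) hDpos
    have hnum : (0:ℝ) < (N:ℝ) - k + 1 := by linarith
    have hlampos : 0 < lam N k := by
      rw [hlamval']; positivity
    have hinv : 1 / lam N k = D N k - D N k * (1 / ((N:ℝ) - k + 1)) := by
      rw [hlamval', one_div_div]
      field_simp
      ring
    have hu0 : (0:ℝ) ≤ 1 / ((N:ℝ) - k + 1) := by positivity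
    have hu1 : 1 / ((N:ℝ) - k + 1) ≤ 1 := by
      rw [div_le_one hnum]; linarith
    refine ⟨hDpos, hDC, hlampos, hinv, ?_, hu0, hu1⟩
    have h1 : 1 / (lam N k) ^ 2 = (1 / lam N k) ^ 2 := by
      rw [div_pow, one_pow]
    rw [h1, hinv]
    have hDu : 0 ≤ D N k * (1 / ((N:ℝ) - k + 1)) := by positivity
    have hDu2 : D N k * (1 / ((N:ℝ) - k + 1)) ≤ D N k := by
      calc D N k * (1 / ((N:ℝ) - k + 1)) ≤ D N k * 1 :=
            mul_le_mul_of_nonneg_left hu1 hDpos.le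
        _ = D N k := by ring
    nlinarith
  -- sum of D telescopes
  have hDsum : ∀ N : ℕ, 2 ≤ N →
      ∑ k ∈ Finset.Icc 1 (N-1), D N k = V 1 - V (1/(N:ℝ)) := by
    intro N hN
    have hNpos : (0:ℝ) < N := by
      have : (2:ℝ) ≤ N := by exact_mod_cast hN
      linarith
    have hterm : ∀ k, D N k = (fun j : ℕ => V ((j:ℝ)/N)) (k+1) - (fun j : ℕ => V ((j:ℝ)/N)) k := by
      intro k
      simp only [hDdef]
    calc ∑ k ∈ Finset.Icc 1 (N-1), D N k
        = ∑ k ∈ Finset.Icc 1 (N-1), ((fun j : ℕ => V ((j:ℝ)/N)) (k+1)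
            - (fun j : ℕ => V ((j:ℝ)/N)) k) := Finset.sum_congr rfl (fun k _ => hterm k)
      _ = V ((N:ℝ)/N) - V (((1:ℕ):ℝ)/N) := telescope_sum (fun j : ℕ => V ((j:ℝ)/N)) N (by omega)
      _ = V 1 - V (1/(N:ℝ)) := by
          rw [div_self (ne_of_gt hNpos)]
          norm_num
  -- probabilistic facts
  have hprob : ∀ N : ℕ, 2 ≤ N →
      MemLp (fun ω => ∑ k ∈ Finset.Icc 1 (N-1), T N k ω) 2 (ℙ : Measure (Ω N)) ∧
      (∫ ω, (∑ k ∈ Finset.Icc 1 (N-1), T N k ω) ∂(ℙ : Measure (Ω N))) = mf N ∧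
      variance (fun ω => ∑ k ∈ Finset.Icc 1 (N-1), T N k ω) (ℙ : Measure (Ω N)) = vf N := by
    intro N hN
    have hTM : ∀ k ∈ Finset.Icc 1 (N-1),
        MemLp (T N k) 2 (ℙ : Measure (Ω N)) ∧
        (∫ ω, T N k ω ∂(ℙ : Measure (Ω N))) = 1 / lam N k ∧
        variance (T N k) (ℙ : Measure (Ω N)) = 1 / (lam N k) ^ 2 := by
      intro k hk
      rw [Finset.mem_Icc] at hk
      obtain ⟨_, _, hlampos, _, _, _, _⟩ := hfacts N hN k hk.1 hk.2
      exact tail_moments (T N k) (hmeas N k) (lam N k) hlampos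
        (fun x hx => hTdist N hN k hk.1 hk.2 x hx)
    have hfe : (∑ k ∈ Finset.Icc 1 (N-1), T N k)
        = (fun ω => ∑ k ∈ Finset.Icc 1 (N-1), T N k ω) := by
      funext ω
      exact Finset.sum_apply ω _ _
    have hLp : MemLp (fun ω => ∑ k ∈ Finset.Icc 1 (N-1), T N k ω) 2 (ℙ : Measure (Ω N)) := by
      rw [← hfe]
      exact memLp_finset_sum' _ (fun k hk => (hTM k hk).1)
    refine ⟨hLp, ?_, ?_⟩
    · rw [integral_finset_sum _ (fun k hk => ((hTM k hk).1).integrable one_le_two)]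
      exact Finset.sum_congr rfl (fun k hk => (hTM k hk).2.1)
    · rw [← hfe, IndepFun.variance_sum (fun k hk => (hTM k hk).1)
        (fun i _ j _ hij => (hind N).indepFun hij)]
      exact Finset.sum_congr rfl (fun k hk => (hTM k hk).2.2)
  -- bounds for mf and vf
  have hsum_bounds : ∀ N : ℕ, 2 ≤ N →
      mf N ≤ V 1 - V (1/(N:ℝ)) ∧
      (V 1 - V (1/(N:ℝ))) - Real.sqrt (C * μ / N) ≤ mf N ∧
      0 ≤ vf N ∧ vf N ≤ C * μ / N := by
    intro N hN
    have hNpos : (0:ℝ) < N := by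
      have : (2:ℝ) ≤ N := by exact_mod_cast hN
      linarith
    have hmem : ∀ k ∈ Finset.Icc 1 (N-1), 1 ≤ k ∧ k ≤ N - 1 := by
      intro k hk; rwa [Finset.mem_Icc] at hk
    -- W bound
    have hV1N : V 0 ≤ V (1/(N:ℝ)) := by
      apply hV0le
      constructor
      · positivity
      · rw [div_le_one hNpos]
        have : (2:ℝ) ≤ N := by exact_mod_cast hN
        linarith
    have hDsum_le : ∑ k ∈ Finset.Icc 1 (N-1), D N k ≤ μ := by
      rw [hDsum N hN, hμdef]; linarith
    have hDsum_nonneg : 0 ≤ ∑ k ∈ Finset.Icc 1 (N-1), D N k :=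
      Finset.sum_nonneg (fun k hk => (hfacts N hN k (hmem k hk).1 (hmem k hk).2).1.le)
    have hW_le : ∑ k ∈ Finset.Icc 1 (N-1), (D N k)^2 ≤ C * μ / N := by
      calc ∑ k ∈ Finset.Icc 1 (N-1), (D N k)^2
          ≤ ∑ k ∈ Finset.Icc 1 (N-1), (C/N) * D N k := by
            apply Finset.sum_le_sum
            intro k hk
            obtain ⟨hD, hDC, _⟩ := hfacts N hN k (hmem k hk).1 (hmem k hk).2
            have := mul_le_mul_of_nonneg_right hDC hD.le
            nlinarith [this]
        _ = (C/N) * ∑ k ∈ Finset.Icc 1 (N-1), D N k := by rw [Finset.mul_sum]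
        _ ≤ (C/N) * μ := by
            apply mul_le_mul_of_nonneg_left hDsum_le (by positivity)
        _ = C * μ / N := by ring
    have hvf_le : vf N ≤ ∑ k ∈ Finset.Icc 1 (N-1), (D N k)^2 := by
      apply Finset.sum_le_sum
      intro k hk
      exact (hfacts N hN k (hmem k hk).1 (hmem k hk).2).2.2.2.2.1
    have hvf_nonneg : 0 ≤ vf N := by
      apply Finset.sum_nonneg
      intro k hk
      obtain ⟨_, _, hlampos, _⟩ := hfacts N hN k (hmem k hk).1 (hmem k hk).2
      positivity
    -- mf = sum D - sum D*u
    have hmf_eq : mf N = (∑ k ∈ Finset.Icc 1 (N-1), D N k)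
        - ∑ k ∈ Finset.Icc 1 (N-1), D N k * (1 / ((N:ℝ) - k + 1)) := by
      rw [hmfdef, ← Finset.sum_sub_distrib]
      exact Finset.sum_congr rfl
        (fun k hk => (hfacts N hN k (hmem k hk).1 (hmem k hk).2).2.2.2.1)
    have hDu_nonneg : 0 ≤ ∑ k ∈ Finset.Icc 1 (N-1), D N k * (1 / ((N:ℝ) - k + 1)) := by
      apply Finset.sum_nonneg
      intro k hk
      obtain ⟨hD, _, _, _, _, hu0, _⟩ := hfacts N hN k (hmem k hk).1 (hmem k hk).2
      positivity
    have hDu_le : ∑ k ∈ Finset.Icc 1 (N-1), D N k * (1 / ((N:ℝ) - k + 1))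
        ≤ Real.sqrt (C * μ / N) := by
      have hCS := Finset.sum_mul_sq_le_sq_mul_sq (Finset.Icc 1 (N-1))
        (fun k => D N k) (fun k => 1 / ((N:ℝ) - k + 1))
      have hhar := harmonic_sq_sum N hN
      have hsq : (∑ k ∈ Finset.Icc 1 (N-1), D N k * (1 / ((N:ℝ) - k + 1)))^2
          ≤ C * μ / N := by
        calc (∑ k ∈ Finset.Icc 1 (N-1), D N k * (1 / ((N:ℝ) - k + 1)))^2
            ≤ (∑ k ∈ Finset.Icc 1 (N-1), (D N k)^2)
              * (∑ k ∈ Finset.Icc 1 (N-1), (1 / ((N:ℝ) - k + 1))^2) := hCS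
          _ ≤ (C * μ / N) * 1 := by
              apply mul_le_mul hW_le hhar
                (Finset.sum_nonneg (fun k _ => sq_nonneg _))
                (le_trans (Finset.sum_nonneg (fun k _ => sq_nonneg _)) hW_le)
          _ = C * μ / N := by ring
      exact (Real.le_sqrt hDu_nonneg (le_trans (sq_nonneg _) hsq)).mpr hsq
    refine ⟨?_, ?_, hvf_nonneg, le_trans hvf_le hW_le⟩
    · rw [hmf_eq, hDsum N hN]
      linarith
    · rw [hmf_eq, hDsum N hN]
      linarith
  -- limits
  have h1N : Tendsto (fun N : ℕ => 1/(N:ℝ)) atTop (nhds 0) :=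
    tendsto_one_div_atTop_nhds_zero_nat
  have hV1Nlim : Tendsto (fun N : ℕ => V (1/(N:ℝ))) atTop (nhds (V 0)) := by
    have hc : ContinuousWithinAt V (Set.Icc (0:ℝ) 1) 0 :=
      hV.continuousOn.continuousWithinAt (by norm_num)
    apply hc.tendsto.comp
    apply tendsto_nhdsWithin_of_tendsto_nhds_of_eventually_within _ h1N
    filter_upwards [eventually_ge_atTop 1] with N hN
    have hNpos : (0:ℝ) < N := by
      have : (1:ℝ) ≤ N := by exact_mod_cast hN
      linarith
    constructor
    · positivity
    · rw [div_le_one hNpos]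
      exact_mod_cast hN
  have hCμN : Tendsto (fun N : ℕ => C * μ / N) atTop (nhds 0) := by
    have : (fun N : ℕ => C * μ / N) = (fun N : ℕ => (C * μ) * (1/(N:ℝ))) := by
      funext N; ring
    rw [this]
    have h2 := h1N.const_mul (C * μ)
    rwa [mul_zero] at h2
  have hsqrtlim : Tendsto (fun N : ℕ => Real.sqrt (C * μ / N)) atTop (nhds 0) := by
    have h := hCμN.sqrt
    rwa [Real.sqrt_zero] at h
  have hmflim : Tendsto mf atTop (nhds μ) := by
    apply tendsto_of_tendsto_of_tendsto_of_le_of_le'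
      (g := fun N : ℕ => (V 1 - V (1/(N:ℝ))) - Real.sqrt (C * μ / N))
      (h := fun N : ℕ => V 1 - V (1/(N:ℝ)))
    · have : Tendsto (fun N : ℕ => V 1 - V (1/(N:ℝ))) atTop (nhds (V 1 - V 0)) :=
        (tendsto_const_nhds).sub hV1Nlim
      have h2 := this.sub hsqrtlim
      have he : (V 1 - V 0) - 0 = μ := by rw [hμdef]; ring
      rwa [he] at h2
    · have : Tendsto (fun N : ℕ => V 1 - V (1/(N:ℝ))) atTop (nhds (V 1 - V 0)) :=
        (tendsto_const_nhds).sub hV1Nlim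
      have he : V 1 - V 0 = μ := hμdef.symm
      rwa [he] at this
    · filter_upwards [eventually_ge_atTop 2] with N hN
      exact (hsum_bounds N hN).2.1
    · filter_upwards [eventually_ge_atTop 2] with N hN
      exact (hsum_bounds N hN).1
  have hvflim : Tendsto vf atTop (nhds 0) := by
    apply tendsto_of_tendsto_of_tendsto_of_le_of_le'
      (g := fun _ : ℕ => (0:ℝ)) (h := fun N : ℕ => C * μ / N)
      tendsto_const_nhds hCμN
    · filter_upwards [eventually_ge_atTop 2] with N hN
      exact (hsum_bounds N hN).2.2.1
    · filter_upwards [eventually_ge_atTop 2] with N hN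
      exact (hsum_bounds N hN).2.2.2
  -- conclusion
  intro t ht
  by_cases hlt : t < μ
  · rw [if_pos hlt]
    set ε : ℝ := (μ - t)/2 with hεdef
    have hεpos : 0 < ε := by rw [hεdef]; linarith
    apply tendsto_of_tendsto_of_tendsto_of_le_of_le'
      (g := fun _ : ℕ => (0:ℝ)) (h := fun N : ℕ => vf N / ε^2)
      tendsto_const_nhds
    · have := hvflim.div_const (ε^2)
      simpa using this
    · filter_upwards with N
      exact ENNReal.toReal_nonneg
    · have hmev : ∀ᶠ N : ℕ in atTop, μ - ε ≤ mf N := by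
        have := hmflim (Ioi_mem_nhds (show μ - ε < μ by linarith))
        filter_upwards [this] with N hN
        exact le_of_lt hN
      filter_upwards [eventually_ge_atTop 2, hmev] with N hN hm
      obtain ⟨hLp, hE, hVar⟩ := hprob N hN
      have hsubset : {ω | ∑ k ∈ Finset.Icc 1 (N-1), T N k ω ≤ t}
          ⊆ {ω | ε ≤ |(∑ k ∈ Finset.Icc 1 (N-1), T N k ω)
              - ∫ ω', (∑ k ∈ Finset.Icc 1 (N-1), T N k ω') ∂(ℙ : Measure (Ω N))|} := by
        intro ω hω
        simp only [Set.mem_setOf_eq] at hω ⊢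
        rw [hE]
        rw [abs_sub_comm]
        calc ε = (μ - ε) - t := by rw [hεdef]; ring
          _ ≤ mf N - ∑ k ∈ Finset.Icc 1 (N-1), T N k ω := by
              apply sub_le_sub hm hω
          _ ≤ |mf N - ∑ k ∈ Finset.Icc 1 (N-1), T N k ω| := le_abs_self _
      have hcheb := meas_ge_le_variance_div_sq (μ := (ℙ : Measure (Ω N))) hLp hεpos
      rw [hVar] at hcheb
      have hle := le_trans (measure_mono hsubset) hcheb
      exact ENNReal.toReal_le_of_le_ofReal
        (div_nonneg ((hsum_bounds N hN).2.2.1) (sq_nonneg ε)) hle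
  · rw [if_neg hlt]
    have htgt : μ < t := lt_of_le_of_ne (not_lt.1 hlt) (Ne.symm ht)
    set ε : ℝ := (t - μ)/2 with hεdef
    have hεpos : 0 < ε := by rw [hεdef]; linarith
    apply tendsto_of_tendsto_of_tendsto_of_le_of_le'
      (g := fun N : ℕ => 1 - vf N / ε^2) (h := fun _ : ℕ => (1:ℝ))
    · have h2 := hvflim.div_const (ε^2)
      have h3 : Tendsto (fun N : ℕ => 1 - vf N / ε^2) atTop (nhds (1 - 0/ε^2)) :=
        tendsto_const_nhds.sub h2
      simpa using h3
    · exact tendsto_const_nhds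
    · filter_upwards [eventually_ge_atTop 2] with N hN
      obtain ⟨hLp, hE, hVar⟩ := hprob N hN
      have hm_ub : mf N ≤ μ := by
        have h1 := (hsum_bounds N hN).1
        have hNpos : (0:ℝ) < N := by
          have : (2:ℝ) ≤ N := by exact_mod_cast hN
          linarith
        have hV1N : V 0 ≤ V (1/(N:ℝ)) := by
          apply hV0le
          constructor
          · positivity
          · rw [div_le_one hNpos]
            have : (2:ℝ) ≤ N := by exact_mod_cast hN
            linarith
        rw [hμdef]; linarith
      have hSmeas : Measurable (fun ω => ∑ k ∈ Finset.Icc 1 (N-1), T N k ω) :=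
        Finset.measurable_sum _ (fun k _ => hmeas N k)
      have hsubset : {ω | t < ∑ k ∈ Finset.Icc 1 (N-1), T N k ω}
          ⊆ {ω | ε ≤ |(∑ k ∈ Finset.Icc 1 (N-1), T N k ω)
              - ∫ ω', (∑ k ∈ Finset.Icc 1 (N-1), T N k ω') ∂(ℙ : Measure (Ω N))|} := by
        intro ω hω
        simp only [Set.mem_setOf_eq] at hω ⊢
        rw [hE]
        calc ε ≤ t - μ := by rw [hεdef]; linarith
          _ ≤ (∑ k ∈ Finset.Icc 1 (N-1), T N k ω) - mf N := by
              apply sub_le_sub (le_of_lt hω) hm_ub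
          _ ≤ |(∑ k ∈ Finset.Icc 1 (N-1), T N k ω) - mf N| := le_abs_self _
      have hcheb := meas_ge_le_variance_div_sq (μ := (ℙ : Measure (Ω N))) hLp hεpos
      rw [hVar] at hcheb
      have hle := le_trans (measure_mono hsubset) hcheb
      have hq : (ℙ {ω | t < ∑ k ∈ Finset.Icc 1 (N-1), T N k ω}).toReal ≤ vf N / ε^2 :=
        ENNReal.toReal_le_of_le_ofReal
          (div_nonneg ((hsum_bounds N hN).2.2.1) (sq_nonneg ε)) hle
      have hcompl : {ω | ∑ k ∈ Finset.Icc 1 (N-1), T N k ω ≤ t}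
          = {ω | t < ∑ k ∈ Finset.Icc 1 (N-1), T N k ω}ᶜ := by
        ext ω; simp [not_lt]
      have hmset : MeasurableSet {ω | t < ∑ k ∈ Finset.Icc 1 (N-1), T N k ω} :=
        hSmeas measurableSet_Ioi
      rw [hcompl, measure_compl hmset (measure_ne_top _ _), measure_univ,
        ENNReal.toReal_sub_of_le prob_le_one ENNReal.one_ne_top]
      simp only [ENNReal.toReal_one]
      linarith
    · filter_upwards with N
      calc (ℙ {ω | ∑ k ∈ Finset.Icc 1 (N-1), T N k ω ≤ t}).toReal
          ≤ (1 : ENNReal).toReal := ENNReal.toReal_mono ENNReal.one_ne_top prob_le_one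
        _ = 1 := ENNReal.toReal_one
end
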